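/- arXiv:2210.07064 — 2 statements merged into one kernel-verified Lean document; each statement's English description precedes it below -/
import Mathlib

section
/- Let q ∈ [1,∞) and b ∈ BMO(ℝⁿ). Then b² belongs to BMO_b^q; more precisely, there exists a constant C depending only on n and q such that sup over balls B of inf_{c₀,c₁∈ℝ} (⨍_B |b(x)² − c₀ − c₁ b(x)|^q dx)^{1/q} ≤ C ‖b‖_{BMO}². -/
open MeasureTheory Metric Set
open scoped ENNReal NNReal BigOperators

noncomputable section

/-- Shorthand for `ℝⁿ`. -/
abbrev Rn (n : ℕ) := EuclideanSpace ℝ (Fin n)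

/-- Axis-parallel cube with center `c` and half side length `r`. -/
def cube {n : ℕ} (c : Rn n) (r : ℝ) : Set (Rn n) := {y | ∀ i, |y i - c i| ≤ r}

/-- The Hardy–Littlewood maximal function (over axis-parallel cubes), `ℝ≥0∞`-valued. -/
def mFn {n : ℕ} (f : Rn n → ℝ) (x : Rn n) : ℝ≥0∞ :=
  ⨆ (c : Rn n) (r : ℝ) (_ : 0 < r) (_ : x ∈ cube c r),
    (∫⁻ y in cube c r, ENNReal.ofReal |f y|) / volume (cube c r)

/-- A weight: a nonnegative locally integrable function on `ℝⁿ`. -/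
def IsWeight {n : ℕ} (w : Rn n → ℝ) : Prop :=
  (∀ x, 0 ≤ w x) ∧ LocallyIntegrable w volume

/-- The `A₁` constant `‖Mw/w‖_{L^∞}`. -/
def A1Const {n : ℕ} (w : Rn n → ℝ) : ℝ≥0∞ :=
  essSup (fun x => mFn w x / ENNReal.ofReal (w x)) volume

def IsA1 {n : ℕ} (w : Rn n → ℝ) : Prop :=
  IsWeight w ∧ A1Const w < ∞

/-- The `A_p` constant `sup_Q (⨍_Q w) (⨍_Q w^{-1/(p-1)})^{p-1}`. -/
def ApConst {n : ℕ} (p : ℝ) (w : Rn n → ℝ) : ℝ≥0∞ :=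
  ⨆ (c : Rn n) (r : ℝ) (_ : 0 < r),
    ((∫⁻ y in cube c r, ENNReal.ofReal (w y)) / volume (cube c r)) *
      ((∫⁻ y in cube c r, ENNReal.ofReal (w y ^ (-(p - 1)⁻¹))) / volume (cube c r)) ^ (p - 1)

def IsAp {n : ℕ} (p : ℝ) (w : Rn n → ℝ) : Prop :=
  IsWeight w ∧ ApConst p w < ∞

/-- The norm `‖f‖_{L^p(w)} = (∫ |f|^p w)^{1/p}`. -/
def wtLp {n : ℕ} (p : ℝ) (w f : Rn n → ℝ) : ℝ≥0∞ :=
  (∫⁻ x, ENNReal.ofReal |f x| ^ p * ENNReal.ofReal (w x)) ^ (1 / p)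

/-- The (unweighted) norm `‖g‖_{L^p} = (∫ |g|^p)^{1/p}`. -/
def eLpN {n : ℕ} (p : ℝ) (g : Rn n → ℝ) : ℝ≥0∞ :=
  (∫⁻ x, ENNReal.ofReal |g x| ^ p) ^ (1 / p)

/-- The norm `‖g‖_{L^∞}`. -/
def eLinf {n : ℕ} (g : Rn n → ℝ) : ℝ≥0∞ :=
  essSup (fun x => ENNReal.ofReal |g x|) volume

/-- Bounded, measurable, compactly supported function. -/
def BddCS {n : ℕ} (f : Rn n → ℝ) : Prop :=
  Measurable f ∧ (∃ C : ℝ, ∀ x, |f x| ≤ C) ∧ HasCompactSupport f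

/-- Smooth compactly supported function. -/
def SmoothCS {n : ℕ} (f : Rn n → ℝ) : Prop :=
  ContDiff ℝ (⊤ : ℕ∞) f ∧ HasCompactSupport f

/-- The `BMO` norm `sup_B ⨍_B |b - b_B|`, `ℝ≥0∞`-valued (sup over balls). -/
def bmoNorm {n : ℕ} (b : Rn n → ℝ) : ℝ≥0∞ :=
  ⨆ (x : Rn n) (r : ℝ) (_ : 0 < r),
    (∫⁻ y in ball x r, ENNReal.ofReal |b y - ⨍ z in ball x r, b z|) / volume (ball x r)

def IsBMO {n : ℕ} (b : Rn n → ℝ) : Prop :=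
  LocallyIntegrable b volume ∧ bmoNorm b < ∞

/-- A Calderón–Zygmund operator `T` with kernel `K` and modulus of continuity `ω`. -/
structure IsCZO (n : ℕ) (T : (Rn n → ℝ) → Rn n → ℝ) (K : Rn n → Rn n → ℝ) (ω : ℝ → ℝ) : Prop where
  map_add : ∀ f g, T (f + g) = T f + T g
  map_smul : ∀ (c : ℝ) (f), T (c • f) = c • T f
  l2_bounded : ∃ C : ℝ≥0∞, C < ∞ ∧ ∀ f, eLpNorm (T f) 2 volume ≤ C * eLpNorm f 2 volume
  repr : ∀ f, BddCS f → ∀ x ∉ tsupport f, T f x = ∫ y, K x y * f y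
  size : ∃ CK : ℝ, ∀ x y, x ≠ y → |K x y| ≤ CK * ‖x - y‖ ^ (-(n : ℝ))
  smooth : ∀ x y z : Rn n, x ≠ y → 2 * ‖x - z‖ ≤ ‖x - y‖ →
    |K x y - K z y| + |K y x - K y z| ≤ ω (‖x - z‖ / ‖x - y‖) * ‖x - y‖ ^ (-(n : ℝ))
  omega_cont : Continuous ω
  omega_mono : MonotoneOn ω (Set.Ici 0)
  omega_nonneg : ∀ t, 0 ≤ t → 0 ≤ ω t
  omega_subadd : ∀ s t, 0 ≤ s → 0 ≤ t → ω (s + t) ≤ ω s + ω t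

/-- The Dini condition `∫₀¹ ω(t) dt/t < ∞`. -/
def DiniCond (ω : ℝ → ℝ) : Prop := IntegrableOn (fun t => ω t / t) (Set.Ioo 0 1) volume

/-- The log-Dini condition `∫₀¹ ω(t) log(1/t) dt/t < ∞`. -/
def LogDiniCond (ω : ℝ → ℝ) : Prop :=
  IntegrableOn (fun t => ω t * Real.log t⁻¹ / t) (Set.Ioo 0 1) volume

/-- The commutator `[b,T]f = b·Tf - T(bf)`. -/
def czComm {n : ℕ} (b : Rn n → ℝ) (T : (Rn n → ℝ) → Rn n → ℝ) (f : Rn n → ℝ) : Rn n → ℝ :=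
  fun x => b x * T f x - T (fun y => b y * f y) x

/-- Lerner's grand maximal operator `𝓜_T`. -/
def grandM {n : ℕ} (T : (Rn n → ℝ) → Rn n → ℝ) (f : Rn n → ℝ) (x : Rn n) : ℝ≥0∞ :=
  ⨆ (c : Rn n) (r : ℝ) (_ : 0 < r) (_ : x ∈ ball c r),
    essSup (fun z => ENNReal.ofReal |T (((ball c (2 * r))ᶜ).indicator f) z|)
      (volume.restrict (ball c r))


open Filter
open scoped Topology

namespace JNaux


variable {n : ℕ}

/-- The volume of a ball, as a real number. -/
def vB (n : ℕ) (x : Rn n) (r : ℝ) : ℝ := (volume (ball x r)).toReal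

/-- The average of `b` over a ball. -/
def mB (b : Rn n → ℝ) (x : Rn n) (r : ℝ) : ℝ := ⨍ z in ball x r, b z

/-- `∫_{B(x,r)} |b - c|`. -/
def Jb (b : Rn n → ℝ) (c : ℝ) (x : Rn n) (r : ℝ) : ℝ := ∫ y in ball x r, |b y - c|

lemma vB_pos (x : Rn n) {r : ℝ} (hr : 0 < r) : 0 < vB n x r :=
  ENNReal.toReal_pos (measure_ball_pos volume x hr).ne' measure_ball_lt_top.ne

lemma volume_ball_eq (x : Rn n) (r : ℝ) :
    volume (ball x r) = ENNReal.ofReal (vB n x r) :=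
  (ENNReal.ofReal_toReal measure_ball_lt_top.ne).symm

lemma nontrivial_Rn (hn : n ≠ 0) : Nontrivial (Rn n) := by
  have : Nonempty (Fin n) := ⟨⟨0, Nat.pos_of_ne_zero hn⟩⟩
  refine ⟨0, EuclideanSpace.single (Classical.arbitrary (Fin n)) 1, fun h => ?_⟩
  have := congrFun (congrArg (fun f : Rn n => (f : Fin n → ℝ)) h)
    (Classical.arbitrary (Fin n))
  simp [EuclideanSpace.single_apply] at this

lemma vB_scale (hn : n ≠ 0) (x : Rn n) {r : ℝ} (hr : 0 ≤ r) {k : ℝ} (hk : 0 ≤ k) :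
    vB n x (k * r) = k ^ n * vB n x r := by
  have := nontrivial_Rn hn
  unfold vB
  rw [Measure.addHaar_ball volume x (mul_nonneg hk hr), Measure.addHaar_ball volume x hr,
    finrank_euclideanSpace_fin, ENNReal.toReal_mul, ENNReal.toReal_mul,
    ENNReal.toReal_ofReal (pow_nonneg (mul_nonneg hk hr) n),
    ENNReal.toReal_ofReal (pow_nonneg hr n), mul_pow, mul_assoc]

lemma vB_center (hn : n ≠ 0) (x x' : Rn n) {r : ℝ} (hr : 0 ≤ r) :
    vB n x r = vB n x' r := by
  have := nontrivial_Rn hn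
  unfold vB
  rw [Measure.addHaar_ball volume x hr, Measure.addHaar_ball volume x' hr]

variable {b : Rn n → ℝ}

lemma intOn (hloc : LocallyIntegrable b volume) (x : Rn n) (r : ℝ) :
    IntegrableOn b (ball x r) volume :=
  (hloc.integrableOn_isCompact (isCompact_closedBall x r)).mono_set ball_subset_closedBall

lemma intAbs (hloc : LocallyIntegrable b volume) (c : ℝ) (x : Rn n) (r : ℝ) :
    IntegrableOn (fun y => |b y - c|) (ball x r) volume :=
  ((intOn hloc x r).sub (integrableOn_const measure_ball_lt_top.ne)).abs

lemma Jb_nonneg (c : ℝ) (x : Rn n) (r : ℝ) : 0 ≤ Jb b c x r :=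
  integral_nonneg fun _ => abs_nonneg _

lemma Jb_mono_set (hloc : LocallyIntegrable b volume) (c : ℝ) {x x' : Rn n} {r r' : ℝ}
    (h : ball x r ⊆ ball x' r') : Jb b c x r ≤ Jb b c x' r' :=
  setIntegral_mono_set (intAbs hloc c x' r')
    (Eventually.of_forall fun _ => abs_nonneg _) (HasSubset.Subset.eventuallyLE h)

lemma mB_mul_vB (hloc : LocallyIntegrable b volume) (x : Rn n) {r : ℝ} (hr : 0 < r) :
    mB b x r * vB n x r = ∫ y in ball x r, b y := by
  unfold mB vB
  rw [setAverage_eq, smul_eq_mul, measureReal_def]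
  have h := (vB_pos x hr).ne'
  unfold vB at h
  field_simp

lemma avg_sub (hloc : LocallyIntegrable b volume) (c : ℝ) (x : Rn n) {r : ℝ} (hr : 0 < r) :
    |mB b x r - c| * vB n x r ≤ Jb b c x r := by
  have h1 : (mB b x r - c) * vB n x r = ∫ y in ball x r, (b y - c) := by
    rw [sub_mul, mB_mul_vB hloc x hr, integral_sub (intOn hloc x r)
      (integrableOn_const measure_ball_lt_top.ne), setIntegral_const, smul_eq_mul,
      mul_comm]
    rfl
  calc |mB b x r - c| * vB n x r = |(mB b x r - c) * vB n x r| := by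
        rw [abs_mul, abs_of_nonneg (vB_pos x hr).le]
    _ = |∫ y in ball x r, (b y - c)| := by rw [h1]
    _ ≤ ∫ y in ball x r, |b y - c| := by
        simpa [Real.norm_eq_abs] using
          norm_integral_le_integral_norm (μ := volume.restrict (ball x r))
            (fun y => b y - c)

lemma Jb_shift (hloc : LocallyIntegrable b volume) (c c' : ℝ) (x : Rn n) {r : ℝ} (hr : 0 < r) :
    Jb b c' x r ≤ Jb b c x r + |c - c'| * vB n x r := by
  have : Jb b c' x r ≤ ∫ y in ball x r, (|b y - c| + |c - c'|) := by
    apply setIntegral_mono_on (intAbs hloc c' x r)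
      ((intAbs hloc c x r).add (integrableOn_const measure_ball_lt_top.ne))
      measurableSet_ball
    intro y _
    calc |b y - c'| = |(b y - c) + (c - c')| := by ring_nf
      _ ≤ |b y - c| + |c - c'| := abs_add_le _ _
  rw [integral_add (intAbs hloc c x r) (integrableOn_const measure_ball_lt_top.ne),
    setIntegral_const, smul_eq_mul, mul_comm] at this
  exact this


-- == chunk 2 ==

def Lam0 (n : ℕ) : ℝ := 2 ^ n * (1 + 2 ^ n)

def Dcz (n : ℕ) : ℝ := 12 ^ n * Lam0 n + 1

lemma Lam0_pos : 0 < Lam0 n := by unfold Lam0; positivity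

lemma Dcz_pos : 0 < Dcz n := by have := Lam0_pos (n := n); unfold Dcz; positivity

lemma vB_mono (x : Rn n) {r r' : ℝ} (h : r ≤ r') : vB n x r ≤ vB n x r' :=
  ENNReal.toReal_mono measure_ball_lt_top.ne (measure_mono (ball_subset_ball h))

lemma two_ball (hn : n ≠ 0) (hloc : LocallyIntegrable b volume)
    (hb1 : ∀ x r, 0 < r → Jb b (mB b x r) x r ≤ vB n x r)
    (x₀ : Rn n) {ρ : ℝ} (hρ : 0 < ρ) :
    Jb b (mB b x₀ ρ) x₀ (2 * ρ) ≤ Lam0 n * vB n x₀ ρ := by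
  set c := mB b x₀ ρ
  set m2 := mB b x₀ (2 * ρ)
  have h2ρ : (0:ℝ) < 2 * ρ := by linarith
  have hv : vB n x₀ (2 * ρ) = 2 ^ n * vB n x₀ ρ := vB_scale hn x₀ hρ.le (by norm_num)
  have hvρ := vB_pos x₀ hρ
  have h1 : Jb b c x₀ (2 * ρ) ≤ Jb b m2 x₀ (2 * ρ) + |m2 - c| * vB n x₀ (2 * ρ) :=
    Jb_shift hloc m2 c x₀ h2ρ
  have h2 : Jb b m2 x₀ (2 * ρ) ≤ vB n x₀ (2 * ρ) := hb1 x₀ (2 * ρ) h2ρ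
  have h3 : |m2 - c| ≤ 2 ^ n := by
    have ha : |c - m2| * vB n x₀ ρ ≤ Jb b m2 x₀ ρ := avg_sub hloc m2 x₀ hρ
    have hb : Jb b m2 x₀ ρ ≤ Jb b m2 x₀ (2 * ρ) :=
      Jb_mono_set hloc m2 (ball_subset_ball (by linarith))
    rw [abs_sub_comm] at ha
    nlinarith [Jb_nonneg (b := b) m2 x₀ ρ]
  calc Jb b c x₀ (2 * ρ) ≤ vB n x₀ (2 * ρ) + |m2 - c| * vB n x₀ (2 * ρ) := by linarith
    _ ≤ vB n x₀ (2 * ρ) + 2 ^ n * vB n x₀ (2 * ρ) := by nlinarith [vB_pos x₀ h2ρ]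
    _ = Lam0 n * vB n x₀ ρ := by rw [hv]; unfold Lam0; ring

lemma big_radius (hn : n ≠ 0) (hloc : LocallyIntegrable b volume)
    (hb1 : ∀ x r, 0 < r → Jb b (mB b x r) x r ≤ vB n x r)
    (x₀ : Rn n) {ρ : ℝ} (hρ : 0 < ρ) {x : Rn n} (hx : x ∈ ball x₀ ρ)
    {s : ℝ} (hs1 : ρ / 12 ≤ s) (hs2 : s ≤ ρ) :
    Jb b (mB b x₀ ρ) x s ≤ (12 ^ n * Lam0 n) * vB n x s := by
  have hsub : ball x s ⊆ ball x₀ (2 * ρ) := by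
    intro y hy
    have := mem_ball.1 hy
    have hxx := mem_ball.1 hx
    rw [mem_ball]
    calc dist y x₀ ≤ dist y x + dist x x₀ := dist_triangle _ _ _
      _ < s + ρ := by linarith
      _ ≤ 2 * ρ := by linarith
  have h1 : Jb b (mB b x₀ ρ) x s ≤ Jb b (mB b x₀ ρ) x₀ (2 * ρ) :=
    Jb_mono_set hloc _ hsub
  have h2 := two_ball hn hloc hb1 x₀ hρ
  have h3 : vB n x₀ ρ ≤ 12 ^ n * vB n x s := by
    have e1 : vB n x₀ ρ = vB n x ρ := vB_center hn x₀ x hρ.le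
    have e2 : vB n x ρ = vB n x (12 * (ρ / 12)) := by congr 1; ring
    have e3 : vB n x (12 * (ρ / 12)) = 12 ^ n * vB n x (ρ / 12) :=
      vB_scale hn x (by linarith) (by norm_num)
    have e4 : vB n x (ρ / 12) ≤ vB n x s := vB_mono x hs1
    have : (0:ℝ) ≤ 12 ^ n := by positivity
    rw [e1, e2, e3]
    nlinarith
  have hL := Lam0_pos (n := n)
  nlinarith

/-- Lebesgue differentiation in the form we need. -/
lemma leb (hloc : LocallyIntegrable b volume) :
    ∀ᵐ x ∂(volume : Measure (Rn n)),
      Tendsto (fun r => ⨍ y in closedBall x r, |b y - b x|) (𝓝[>] 0) (𝓝 0) := by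
  filter_upwards [IsUnifLocDoublingMeasure.ae_tendsto_average_norm_sub volume hloc 1] with x hx
  have := hx (fun _ : ℝ => x) id tendsto_id
    (by filter_upwards [self_mem_nhdsWithin] with r (hr : 0 < r)
        simp only [one_mul, id_eq]
        exact mem_closedBall_self hr.le)
  simpa [Real.norm_eq_abs] using this

lemma cb_vol (hn : n ≠ 0) (x : Rn n) (r : ℝ) :
    volume (closedBall x r) = volume (ball x r) := by
  have := nontrivial_Rn hn
  exact Measure.addHaar_closedBall_eq_addHaar_ball volume x r


lemma small_radius (hn : n ≠ 0) (hloc : LocallyIntegrable b volume) {x : Rn n}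
    (hx : Tendsto (fun r => ⨍ y in closedBall x r, |b y - b x|) (𝓝[>] 0) (𝓝 0))
    {c lam : ℝ} (hlam' : lam < |b x - c|) {r₀ : ℝ} (hr₀ : 0 < r₀) :
    ∃ r₁, 0 < r₁ ∧ r₁ ≤ r₀ ∧ lam * vB n x r₁ < Jb b c x r₁ := by
  have hε : 0 < |b x - c| - lam := by linarith
  have h1 : ∀ᶠ r in 𝓝[>] (0:ℝ),
      ⨍ y in closedBall x r, |b y - b x| < |b x - c| - lam :=
    hx.eventually_lt_const hε
  have h2 : ∀ᶠ r in 𝓝[>] (0:ℝ), r ∈ Set.Ioo (0:ℝ) r₀ :=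
    Ioo_mem_nhdsGT hr₀
  obtain ⟨r₁, hav, hr₁o⟩ := (h1.and h2).exists
  obtain ⟨hr₁, hr₁'⟩ := hr₁o
  refine ⟨r₁, hr₁, hr₁'.le, ?_⟩
  have hvb := vB_pos x hr₁
  have hcbvol : (volume (closedBall x r₁)).toReal = vB n x r₁ := by
    rw [cb_vol hn]; rfl
  have hint_cb : IntegrableOn (fun y => |b y - b x|) (closedBall x r₁) volume :=
    ((hloc.integrableOn_isCompact (isCompact_closedBall x r₁)).sub
      (integrableOn_const measure_closedBall_lt_top.ne)).abs
  have hint_ball : IntegrableOn (fun y => |b y - b x|) (ball x r₁) volume :=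
    hint_cb.mono_set ball_subset_closedBall
  have h3 : ∫ y in ball x r₁, |b y - b x| ≤ ∫ y in closedBall x r₁, |b y - b x| :=
    setIntegral_mono_set hint_cb (Eventually.of_forall fun _ => abs_nonneg _)
      (HasSubset.Subset.eventuallyLE ball_subset_closedBall)
  have h4 : ∫ y in closedBall x r₁, |b y - b x|
      = (⨍ y in closedBall x r₁, |b y - b x|) * vB n x r₁ := by
    rw [setAverage_eq, smul_eq_mul, measureReal_def, hcbvol]
    field_simp
  have h5 : ∫ y in ball x r₁, |b y - b x| < (|b x - c| - lam) * vB n x r₁ := by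
    calc ∫ y in ball x r₁, |b y - b x| ≤ ∫ y in closedBall x r₁, |b y - b x| := h3
      _ = (⨍ y in closedBall x r₁, |b y - b x|) * vB n x r₁ := h4
      _ < (|b x - c| - lam) * vB n x r₁ := by
          apply mul_lt_mul_of_pos_right hav hvb
  have h6 : |b x - c| * vB n x r₁ - ∫ y in ball x r₁, |b y - b x| ≤ Jb b c x r₁ := by
    have : ∫ y in ball x r₁, (|b x - c| - |b y - b x|) ≤ Jb b c x r₁ := by
      apply setIntegral_mono_on
        ((integrableOn_const measure_ball_lt_top.ne).sub hint_ball)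
        (intAbs hloc c x r₁) measurableSet_ball
      intro y _
      have t1 : |b x - c| ≤ |b y - c| + |b x - b y| := by
        have := abs_sub_le (b x) (b y) c
        linarith [abs_sub_le (b x) (b y) c]
      have t2 : |b x - b y| = |b y - b x| := abs_sub_comm _ _
      show |b x - c| - |b y - b x| ≤ |b y - c|
      linarith
    rw [integral_sub (integrableOn_const (C := |b x - c|) measure_ball_lt_top.ne) hint_ball,
      setIntegral_const, smul_eq_mul, mul_comm] at this
    exact this
  nlinarith

/-- The Calderón–Zygmund type selection. -/
lemma cz (hn : n ≠ 0) (hloc : LocallyIntegrable b volume)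
    (hb1 : ∀ x r, 0 < r → Jb b (mB b x r) x r ≤ vB n x r)
    (x₀ : Rn n) {ρ : ℝ} (hρ : 0 < ρ) {lam : ℝ} (hlam : Dcz n ≤ lam) :
    ∃ s : Set (Rn n × ℝ), s.Countable ∧
      (∀ p ∈ s, p.1 ∈ ball x₀ ρ ∧ 0 < p.2 ∧ p.2 ≤ ρ / 12) ∧
      (s.PairwiseDisjoint fun p => closedBall p.1 p.2) ∧
      (∀ p ∈ s, lam * vB n p.1 p.2 ≤ Jb b (mB b x₀ ρ) p.1 p.2) ∧
      (∀ p ∈ s, Jb b (mB b x₀ ρ) p.1 (6 * p.2) ≤ lam * vB n p.1 (6 * p.2)) ∧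
      volume ({y ∈ ball x₀ ρ | lam < |b y - mB b x₀ ρ|} \
        (⋃ p ∈ s, closedBall p.1 (5 * p.2))) = 0 := by
  set c := mB b x₀ ρ with hc
  set P : Rn n → Prop := fun x =>
    Tendsto (fun r => ⨍ y in closedBall x r, |b y - b x|) (𝓝[>] 0) (𝓝 0) with hP
  set E : Set (Rn n) := {y ∈ ball x₀ ρ | lam < |b y - c|} with hE
  set T : Set (Rn n) := {x | x ∈ E ∧ P x} with hT
  have hlam0 : 0 < lam := lt_of_lt_of_le Dcz_pos hlam
  have key : ∀ x ∈ T, ∃ rr : ℝ, 0 < rr ∧ rr ≤ ρ / 12 ∧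
      lam * vB n x rr < Jb b c x rr ∧
      Jb b c x (6 * rr) ≤ lam * vB n x (6 * rr) := by
    rintro x ⟨⟨hxball, hxlam⟩, hxP⟩
    set S : Set ℝ := {s : ℝ | 0 < s ∧ s ≤ ρ ∧ lam * vB n x s < Jb b c x s} with hS
    have hSsub : ∀ s ∈ S, s ≤ ρ / 12 := by
      rintro s ⟨hs0, hsρ, hsJ⟩
      by_contra hbig
      push_neg at hbig
      have := big_radius hn hloc hb1 x₀ hρ hxball hbig.le hsρ
      have hvpos := vB_pos x hs0
      have : Jb b c x s < lam * vB n x s := by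
        calc Jb b c x s ≤ (12 ^ n * Lam0 n) * vB n x s := this
          _ < Dcz n * vB n x s := by
              apply mul_lt_mul_of_pos_right _ hvpos
              unfold Dcz; linarith
          _ ≤ lam * vB n x s := mul_le_mul_of_nonneg_right hlam hvpos.le
      linarith
    obtain ⟨r₁, hr₁0, hr₁12, hr₁J⟩ :=
      small_radius hn hloc hxP hxlam (by positivity : (0:ℝ) < ρ / 12)
    have hr₁S : r₁ ∈ S := ⟨hr₁0, by linarith, hr₁J⟩
    have hne : S.Nonempty := ⟨r₁, hr₁S⟩
    have hbdd : BddAbove S := ⟨ρ / 12, fun s hs => hSsub s hs⟩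
    set rstar := sSup S with hrstar
    have hrstar_pos : 0 < rstar := lt_of_lt_of_le hr₁0 (le_csSup hbdd hr₁S)
    have hrstar12 : rstar ≤ ρ / 12 := csSup_le hne (fun s hs => hSsub s hs)
    obtain ⟨r, hrS, hrlt⟩ := exists_lt_of_lt_csSup hne (by linarith : rstar / 2 < rstar)
    obtain ⟨hr0, hrρ, hrJ⟩ := hrS
    have hrle : r ≤ rstar := le_csSup hbdd ⟨hr0, hrρ, hrJ⟩
    refine ⟨r, hr0, le_trans hrle hrstar12, hrJ, ?_⟩
    have h6r : 6 * r ∉ S := by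
      intro hmem
      have := le_csSup hbdd hmem
      linarith
    have h6r0 : 0 < 6 * r := by linarith
    have h6rρ : 6 * r ≤ ρ := by linarith [le_trans hrle hrstar12]
    by_contra hcon
    push_neg at hcon
    exact h6r ⟨h6r0, h6rρ, hcon⟩
  classical
  set rfun : Rn n → ℝ := fun x => if h : x ∈ T then (key x h).choose else 1 with hrfun
  have rfun_pos : ∀ x ∈ T, 0 < rfun x := by
    intro x hx; rw [hrfun]; simp only [dif_pos hx]; exact (key x hx).choose_spec.1
  have rfun_12 : ∀ x ∈ T, rfun x ≤ ρ / 12 := by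
    intro x hx; rw [hrfun]; simp only [dif_pos hx]; exact (key x hx).choose_spec.2.1
  have rfun_low : ∀ x ∈ T, lam * vB n x (rfun x) < Jb b c x (rfun x) := by
    intro x hx; rw [hrfun]; simp only [dif_pos hx]; exact (key x hx).choose_spec.2.2.1
  have rfun_high : ∀ x ∈ T, Jb b c x (6 * rfun x) ≤ lam * vB n x (6 * rfun x) := by
    intro x hx; rw [hrfun]; simp only [dif_pos hx]; exact (key x hx).choose_spec.2.2.2
  obtain ⟨u, huT, hdisj, hcov⟩ :=
    Vitali.exists_disjoint_subfamily_covering_enlargement_closedBall T id rfun (ρ / 12)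
      (fun a ha => rfun_12 a ha) 5 (by norm_num)
  have hucount : u.Countable := by
    apply hdisj.countable_of_nonempty_interior
    intro a ha
    have : (ball (id a) (rfun a)).Nonempty :=
      nonempty_ball.2 (rfun_pos a (huT ha))
    exact this.mono ball_subset_interior_closedBall
  refine ⟨(fun x => (x, rfun x)) '' u, hucount.image _, ?_, ?_, ?_, ?_, ?_⟩
  · rintro p ⟨x, hxu, rfl⟩
    exact ⟨(huT hxu).1.1, rfun_pos x (huT hxu), rfun_12 x (huT hxu)⟩
  · rintro p ⟨x, hxu, rfl⟩ p' ⟨x', hx'u, rfl⟩ hne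
    have hxx' : x ≠ x' := by rintro rfl; exact hne rfl
    exact hdisj hxu hx'u hxx'
  · rintro p ⟨x, hxu, rfl⟩
    exact (rfun_low x (huT hxu)).le
  · rintro p ⟨x, hxu, rfl⟩
    exact rfun_high x (huT hxu)
  · have hsub : E \ (⋃ p ∈ (fun x => (x, rfun x)) '' u, closedBall p.1 (5 * p.2))
        ⊆ {x | ¬ P x} := by
      intro y hy
      by_contra hyP
      simp only [mem_setOf_eq, not_not] at hyP
      have hyT : y ∈ T := ⟨hy.1, hyP⟩
      obtain ⟨z, hzu, hzsub⟩ := hcov y hyT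
      have : y ∈ closedBall z (5 * rfun z) := by
        apply hzsub
        exact mem_closedBall_self (rfun_pos y hyT).le
      apply hy.2
      refine mem_biUnion ⟨z, hzu, rfl⟩ this
    apply measure_mono_null hsub
    have := leb (b := b) hloc
    rw [ae_iff] at this
    exact this




lemma decay (hn : n ≠ 0) (k : ℕ) :
    ∃ M : ℝ, 0 < M ∧ ∀ b : Rn n → ℝ, LocallyIntegrable b volume →
      (∀ x r, 0 < r → Jb b (mB b x r) x r ≤ vB n x r) →
      ∀ (x₀ : Rn n) (ρ : ℝ), 0 < ρ → ∀ t : ℝ, 0 < t →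
      volume {y ∈ ball x₀ ρ | t < |b y - mB b x₀ ρ|} ≤
        ENNReal.ofReal (M / t ^ k) * volume (ball x₀ ρ) := by
  have := nontrivial_Rn hn
  induction k with
  | zero =>
    refine ⟨1, one_pos, fun b hloc hb1 x₀ ρ hρ t ht => ?_⟩
    simp only [pow_zero, div_one, ENNReal.ofReal_one, one_mul]
    exact measure_mono (sep_subset _ _)
  | succ k ih =>
    obtain ⟨M, hM, hMk⟩ := ih
    set T₀ : ℝ := 2 ^ (n + 1) * Dcz n with hT₀
    have hT₀pos : 0 < T₀ := by have := Dcz_pos (n := n); positivity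
    set M' : ℝ := max (M * 5 ^ n * Lam0 n * 2 ^ ((n + 1) * (k + 1))) (T₀ ^ (k + 1)) with hM'
    have hM'pos : 0 < M' := lt_of_lt_of_le (pow_pos hT₀pos (k+1)) (le_max_right _ _)
    refine ⟨M', hM'pos, fun b hloc hb1 x₀ ρ hρ t ht => ?_⟩
    rcases le_or_gt t T₀ with hcase | hcase
    · -- trivial case
      have h1 : (1:ℝ) ≤ M' / t ^ (k+1) := by
        rw [le_div_iff₀ (by positivity)]
        calc (1:ℝ) * t ^ (k+1) = t ^ (k+1) := one_mul _
          _ ≤ T₀ ^ (k+1) := pow_le_pow_left₀ ht.le hcase _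
          _ ≤ M' := le_max_right _ _
      calc volume {y ∈ ball x₀ ρ | t < |b y - mB b x₀ ρ|} ≤ volume (ball x₀ ρ) :=
            measure_mono (sep_subset _ _)
        _ ≤ ENNReal.ofReal (M' / t ^ (k+1)) * volume (ball x₀ ρ) :=
            le_mul_of_one_le_left (by simp) (ENNReal.one_le_ofReal.2 h1)
    · -- main case
      set c := mB b x₀ ρ with hc
      set lam : ℝ := t / 2 ^ (n + 1) with hlam
      have hlam0 : 0 < lam := by positivity
      have hlamD : Dcz n ≤ lam := by
        rw [hlam, le_div_iff₀ (by positivity : (0:ℝ) < 2 ^ (n+1))]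
        calc Dcz n * 2 ^ (n+1) = T₀ := by rw [hT₀]; ring
          _ ≤ t := hcase.le
      have ht_eq : t = 2 ^ (n + 1) * lam := by rw [hlam]; field_simp
      obtain ⟨s, hscount, hsgeom, hsdisj, hslow, hshigh, hsnull⟩ :=
        cz hn hloc hb1 x₀ hρ hlamD
      have hs5pos : ∀ p ∈ s, (0:ℝ) < 5 * p.2 := fun p hp => by
        have := (hsgeom p hp).2.1; linarith
      -- center comparison on the 5-balls
      have hm5 : ∀ p ∈ s, |mB b p.1 (5 * p.2) - c| ≤ 2 ^ n * lam := by
        intro p hp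
        obtain ⟨hp1, hp2, hp3⟩ := hsgeom p hp
        have h5 : (0:ℝ) < 5 * p.2 := by linarith
        have hv5 := vB_pos p.1 h5
        have e1 : |mB b p.1 (5 * p.2) - c| * vB n p.1 (5 * p.2) ≤ Jb b c p.1 (5 * p.2) :=
          avg_sub hloc c p.1 h5
        have e2 : Jb b c p.1 (5 * p.2) ≤ Jb b c p.1 (6 * p.2) :=
          Jb_mono_set hloc c (ball_subset_ball (by linarith))
        have e3 := hshigh p hp
        have e4 : vB n p.1 (6 * p.2) ≤ 2 ^ n * vB n p.1 (5 * p.2) := by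
          have : vB n p.1 ((6/5) * (5 * p.2)) = (6/5) ^ n * vB n p.1 (5 * p.2) :=
            vB_scale hn p.1 (by linarith) (by norm_num)
          have h65 : ((6:ℝ)/5) ^ n ≤ 2 ^ n := pow_le_pow_left₀ (by norm_num) (by norm_num) n
          have heq : (6/5 : ℝ) * (5 * p.2) = 6 * p.2 := by ring
          rw [heq] at this
          nlinarith
        have : |mB b p.1 (5 * p.2) - c| * vB n p.1 (5 * p.2)
            ≤ (2 ^ n * lam) * vB n p.1 (5 * p.2) := by
          calc |mB b p.1 (5 * p.2) - c| * vB n p.1 (5 * p.2) ≤ Jb b c p.1 (6 * p.2) :=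
                le_trans e1 e2
            _ ≤ lam * vB n p.1 (6 * p.2) := e3
            _ ≤ lam * (2 ^ n * vB n p.1 (5 * p.2)) :=
                mul_le_mul_of_nonneg_left e4 hlam0.le
            _ = (2 ^ n * lam) * vB n p.1 (5 * p.2) := by ring
        exact le_of_mul_le_mul_right this hv5
      -- inclusion
      set F : Rn n × ℝ → Set (Rn n) :=
        fun p => {y ∈ ball p.1 (5 * p.2) | 2 ^ n * lam < |b y - mB b p.1 (5 * p.2)|} with hF
      have hincl : {y ∈ ball x₀ ρ | t < |b y - c|} ⊆
          ({y ∈ ball x₀ ρ | lam < |b y - c|} \ (⋃ p ∈ s, closedBall p.1 (5 * p.2))) ∪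
          (⋃ p ∈ s, F p ∪ sphere p.1 (5 * p.2)) := by
        intro y hy
        obtain ⟨hyball, hyt⟩ := hy
        have hylam : lam < |b y - c| := by
          have h2 : (2:ℝ) ≤ 2 ^ (n+1) := by
            calc (2:ℝ) = 2 ^ 1 := (pow_one 2).symm
              _ ≤ 2 ^ (n+1) := pow_le_pow_right₀ one_le_two (Nat.le_add_left 1 n)
          have : lam < t := by rw [ht_eq]; nlinarith
          linarith
        by_cases hcov : y ∈ ⋃ p ∈ s, closedBall p.1 (5 * p.2)
        · right
          obtain ⟨p, hp, hyp⟩ := mem_iUnion₂.1 hcov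
          apply mem_biUnion hp
          rcases lt_or_eq_of_le (mem_closedBall.1 hyp) with hlt | heq
          · left
            refine ⟨mem_ball.2 hlt, ?_⟩
            have hm := hm5 p hp
            have habs : |b y - c| - |mB b p.1 (5 * p.2) - c| ≤ |b y - mB b p.1 (5 * p.2)| := by
              have h := abs_sub_abs_le_abs_sub (b y - c) (mB b p.1 (5 * p.2) - c)
              have h2 : (b y - c) - (mB b p.1 (5 * p.2) - c) = b y - mB b p.1 (5 * p.2) := by
                ring
              rw [h2] at h
              linarith
            have ht2 : t - 2 ^ n * lam = 2 ^ n * lam := by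
              rw [ht_eq, pow_succ]; ring
            linarith
          · right; exact mem_sphere.2 heq
        · exact Or.inl ⟨⟨hyball, hylam⟩, hcov⟩
      -- measure estimates
      have hFmeas : ∀ p ∈ s, volume (F p ∪ sphere p.1 (5 * p.2)) ≤
          ENNReal.ofReal (M / (2 ^ n * lam) ^ k * 5 ^ n) * volume (ball p.1 p.2) := by
        intro p hp
        obtain ⟨hp1, hp2, hp3⟩ := hsgeom p hp
        have h5 : (0:ℝ) < 5 * p.2 := by linarith
        have hsph : volume (sphere p.1 (5 * p.2)) = 0 := Measure.addHaar_sphere volume _ _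
        have hF1 : volume (F p) ≤ ENNReal.ofReal (M / (2 ^ n * lam) ^ k) *
            volume (ball p.1 (5 * p.2)) :=
          hMk b hloc hb1 p.1 (5 * p.2) h5 (2 ^ n * lam) (by positivity)
        have hball5 : volume (ball p.1 (5 * p.2)) =
            ENNReal.ofReal ((5:ℝ) ^ n) * volume (ball p.1 p.2) := by
          rw [volume_ball_eq p.1 (5 * p.2), volume_ball_eq p.1 p.2,
            vB_scale hn p.1 hp2.le (by norm_num : (0:ℝ) ≤ 5),
            ENNReal.ofReal_mul (by positivity)]
        calc volume (F p ∪ sphere p.1 (5 * p.2)) ≤ volume (F p) + volume (sphere p.1 (5 * p.2)) :=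
              measure_union_le _ _
          _ = volume (F p) := by rw [hsph, add_zero]
          _ ≤ ENNReal.ofReal (M / (2 ^ n * lam) ^ k) *
              (ENNReal.ofReal ((5:ℝ) ^ n) * volume (ball p.1 p.2)) := by rw [← hball5]; exact hF1
          _ = ENNReal.ofReal (M / (2 ^ n * lam) ^ k * 5 ^ n) * volume (ball p.1 p.2) := by
              rw [ENNReal.ofReal_mul (by positivity), mul_assoc]
      -- Chebyshev + disjointness for the sum of small balls
      have hcheb : ∀ p ∈ s, ENNReal.ofReal lam * volume (ball p.1 p.2) ≤
          ∫⁻ y in ball p.1 p.2, ENNReal.ofReal |b y - c| := by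
        intro p hp
        obtain ⟨hp1, hp2, hp3⟩ := hsgeom p hp
        rw [volume_ball_eq p.1 p.2, ← ENNReal.ofReal_mul hlam0.le]
        rw [← ofReal_integral_eq_lintegral_ofReal (intAbs hloc c p.1 p.2)
          (Eventually.of_forall fun _ => abs_nonneg _)]
        exact ENNReal.ofReal_le_ofReal (hslow p hp)
      have hsubtype : Countable ↥s := hscount.to_subtype
      have hdisj' : Pairwise (Function.onFun Disjoint fun p : s => ball (p : Rn n × ℝ).1
          (p : Rn n × ℝ).2) := by
        intro i j hij
        have : (i : Rn n × ℝ) ≠ (j : Rn n × ℝ) := Subtype.coe_injective.ne hij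
        exact ((hsdisj i.2 j.2 this).mono ball_subset_closedBall ball_subset_closedBall)
      have hsum : ∑' p : s, volume (ball (p : Rn n × ℝ).1 (p : Rn n × ℝ).2) ≤
          ENNReal.ofReal (Lam0 n * vB n x₀ ρ / lam) := by
        have hkey : ENNReal.ofReal lam * ∑' p : s, volume (ball (p : Rn n × ℝ).1
            (p : Rn n × ℝ).2) ≤ ENNReal.ofReal (Lam0 n * vB n x₀ ρ) := by
          rw [← ENNReal.tsum_mul_left]
          calc ∑' p : s, ENNReal.ofReal lam * volume (ball (p : Rn n × ℝ).1 (p : Rn n × ℝ).2)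
              ≤ ∑' p : s, ∫⁻ y in ball (p : Rn n × ℝ).1 (p : Rn n × ℝ).2,
                ENNReal.ofReal |b y - c| := ENNReal.tsum_le_tsum fun p => hcheb p p.2
            _ = ∫⁻ y in ⋃ p : s, ball (p : Rn n × ℝ).1 (p : Rn n × ℝ).2,
                ENNReal.ofReal |b y - c| :=
                (lintegral_iUnion (fun p => measurableSet_ball) hdisj' _).symm
            _ ≤ ∫⁻ y in ball x₀ (2 * ρ), ENNReal.ofReal |b y - c| := by
                apply lintegral_mono_set
                apply iUnion_subset
                rintro ⟨p, hp⟩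
                obtain ⟨hp1, hp2, hp3⟩ := hsgeom p hp
                intro y hy
                have h1 := mem_ball.1 hy
                have h2 := mem_ball.1 hp1
                rw [mem_ball]
                calc dist y x₀ ≤ dist y p.1 + dist p.1 x₀ := dist_triangle _ _ _
                  _ < p.2 + ρ := by linarith
                  _ ≤ 2 * ρ := by linarith
            _ = ENNReal.ofReal (Jb b c x₀ (2 * ρ)) :=
                (ofReal_integral_eq_lintegral_ofReal (intAbs hloc c x₀ (2 * ρ))
                  (Eventually.of_forall fun _ => abs_nonneg _)).symm
            _ ≤ ENNReal.ofReal (Lam0 n * vB n x₀ ρ) :=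
                ENNReal.ofReal_le_ofReal (two_ball hn hloc hb1 x₀ hρ)
        have hne0 : ENNReal.ofReal lam ≠ 0 := by
          simp [ENNReal.ofReal_eq_zero, not_le, hlam0]
        have hnetop : ENNReal.ofReal lam ≠ ⊤ := ENNReal.ofReal_ne_top
        rw [ENNReal.ofReal_div_of_pos hlam0,
          ENNReal.le_div_iff_mul_le (Or.inl hne0) (Or.inl hnetop), mul_comm]
        exact hkey
      -- putting everything together
      have hmain : volume {y ∈ ball x₀ ρ | t < |b y - c|} ≤
          ENNReal.ofReal (M / (2 ^ n * lam) ^ k * 5 ^ n) *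
            ENNReal.ofReal (Lam0 n * vB n x₀ ρ / lam) := by
        calc volume {y ∈ ball x₀ ρ | t < |b y - c|}
            ≤ volume (({y ∈ ball x₀ ρ | lam < |b y - c|} \
                (⋃ p ∈ s, closedBall p.1 (5 * p.2))) ∪
              (⋃ p ∈ s, F p ∪ sphere p.1 (5 * p.2))) := measure_mono hincl
          _ ≤ volume ({y ∈ ball x₀ ρ | lam < |b y - c|} \
                (⋃ p ∈ s, closedBall p.1 (5 * p.2))) +
              volume (⋃ p ∈ s, F p ∪ sphere p.1 (5 * p.2)) := measure_union_le _ _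
          _ = volume (⋃ p ∈ s, F p ∪ sphere p.1 (5 * p.2)) := by rw [hsnull, zero_add]
          _ ≤ ∑' p : s, volume (F p ∪ sphere (p : Rn n × ℝ).1 (5 * (p : Rn n × ℝ).2)) :=
              measure_biUnion_le volume hscount _
          _ ≤ ∑' p : s, ENNReal.ofReal (M / (2 ^ n * lam) ^ k * 5 ^ n) *
              volume (ball (p : Rn n × ℝ).1 (p : Rn n × ℝ).2) :=
              ENNReal.tsum_le_tsum fun p => hFmeas p p.2
          _ = ENNReal.ofReal (M / (2 ^ n * lam) ^ k * 5 ^ n) *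
              ∑' p : s, volume (ball (p : Rn n × ℝ).1 (p : Rn n × ℝ).2) :=
              ENNReal.tsum_mul_left
          _ ≤ ENNReal.ofReal (M / (2 ^ n * lam) ^ k * 5 ^ n) *
              ENNReal.ofReal (Lam0 n * vB n x₀ ρ / lam) :=
              mul_le_mul_right hsum _
      -- final real-number inequality
      have hreal : M / (2 ^ n * lam) ^ k * 5 ^ n * (Lam0 n * vB n x₀ ρ / lam) ≤
          M' / t ^ (k+1) * vB n x₀ ρ := by
        have hV := (vB_pos x₀ hρ).le
        set V := vB n x₀ ρ with hVdef
        have hlk : (0:ℝ) < lam ^ (k+1) := pow_pos hlam0 _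
        have e2 : ((2:ℝ) ^ n * lam) ^ k = 2 ^ (n*k) * lam ^ k := by rw [mul_pow, ← pow_mul]
        have e1 : ((2:ℝ) ^ (n+1) * lam) ^ (k+1) = 2 ^ ((n+1)*(k+1)) * lam ^ (k+1) := by
          rw [mul_pow, ← pow_mul]
        have hL := Lam0_pos (n := n)
        have h2nk : (1:ℝ) ≤ 2 ^ (n*k) := one_le_pow₀ one_le_two
        have hMA : M * 5 ^ n * Lam0 n * 2 ^ ((n + 1) * (k + 1)) ≤ M' := le_max_left _ _
        have hstep : M * 5 ^ n * Lam0 n * 2 ^ ((n+1)*(k+1)) ≤ M' * 2 ^ (n*k) :=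
          hMA.trans (le_mul_of_one_le_right hM'pos.le h2nk)
        have lhs_eq : M / (2 ^ n * lam) ^ k * 5 ^ n * (Lam0 n * V / lam)
            = M * 5 ^ n * (Lam0 n * V) / (2 ^ (n*k) * lam ^ (k+1)) := by
          rw [e2, div_mul_eq_mul_div, div_mul_div_comm, pow_succ]
          ring_nf
        rw [lhs_eq, ht_eq, e1, div_mul_eq_mul_div,
          div_le_div_iff₀ (by positivity) (by positivity)]
        nlinarith [mul_le_mul_of_nonneg_right hstep (mul_nonneg hV hlk.le),
          mul_nonneg hV hlk.le]
      calc volume {y ∈ ball x₀ ρ | t < |b y - c|} ≤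
          ENNReal.ofReal (M / (2 ^ n * lam) ^ k * 5 ^ n) *
            ENNReal.ofReal (Lam0 n * vB n x₀ ρ / lam) := hmain
        _ = ENNReal.ofReal (M / (2 ^ n * lam) ^ k * 5 ^ n * (Lam0 n * vB n x₀ ρ / lam)) :=
            (ENNReal.ofReal_mul (by positivity)).symm
        _ ≤ ENNReal.ofReal (M' / t ^ (k+1) * vB n x₀ ρ) := ENNReal.ofReal_le_ofReal hreal
        _ = ENNReal.ofReal (M' / t ^ (k+1)) * volume (ball x₀ ρ) := by
            rw [ENNReal.ofReal_mul (by positivity), volume_ball_eq]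




lemma moment (hn : n ≠ 0) {p : ℝ} (hp : 1 ≤ p) :
    ∃ C : ℝ, 0 ≤ C ∧ ∀ b : Rn n → ℝ, Measurable b → LocallyIntegrable b volume →
      (∀ x r, 0 < r → Jb b (mB b x r) x r ≤ vB n x r) →
      ∀ (x₀ : Rn n) (ρ : ℝ), 0 < ρ →
      ∫⁻ y in ball x₀ ρ, (ENNReal.ofReal |b y - mB b x₀ ρ|) ^ p ≤
        ENNReal.ofReal C * volume (ball x₀ ρ) := by
  have hp0 : 0 ≤ p := by linarith
  set k : ℕ := ⌈p⌉₊ + 1 with hk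
  have hkp : p < (k : ℝ) := by
    calc p ≤ (⌈p⌉₊ : ℝ) := Nat.le_ceil p
      _ < (k : ℝ) := by rw [hk]; push_cast; linarith
  obtain ⟨M, hM, hMk⟩ := decay hn k
  set r : ℝ := (2:ℝ) ^ (p - (k:ℝ)) with hrdef
  have hr0 : 0 < r := Real.rpow_pos_of_pos two_pos _
  have hr1 : r < 1 := Real.rpow_lt_one_of_one_lt_of_neg one_lt_two (by linarith)
  set C : ℝ := 1 + M * 2 ^ p * (1 - r)⁻¹ with hC
  have h2p : (0:ℝ) < 2 ^ p := Real.rpow_pos_of_pos two_pos _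
  have h1r : (0:ℝ) < 1 - r := by linarith
  have hMr : (0:ℝ) ≤ M * 2 ^ p * (1 - r)⁻¹ :=
    mul_nonneg (mul_nonneg hM.le h2p.le) (inv_nonneg.2 h1r.le)
  have hC0 : 0 ≤ C := by rw [hC]; linarith
  refine ⟨C, hC0, fun b hmeas hloc hb1 x₀ ρ hρ => ?_⟩
  set c := mB b x₀ ρ with hc
  set f : Rn n → ℝ := fun y => |b y - c| with hf
  set S : ℕ → Set (Rn n) := fun j => {z | (2:ℝ) ^ j < f z} with hS
  have hSmeas : ∀ j, MeasurableSet (S j) := by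
    intro j
    have : Measurable f := (hmeas.sub measurable_const).abs
    exact measurableSet_lt measurable_const this
  set g : ℕ → Rn n → ℝ≥0∞ :=
    fun j => (S j).indicator (fun _ => ENNReal.ofReal ((2:ℝ) ^ (j+1)) ^ p) with hg
  -- pointwise bound
  have hpt : ∀ y, (ENNReal.ofReal (f y)) ^ p ≤ 1 + ∑' j : ℕ, g j y := by
    intro y
    rcases le_or_gt (f y) 1 with hle | hlt
    · have : (ENNReal.ofReal (f y)) ^ p ≤ 1 := by
        calc (ENNReal.ofReal (f y)) ^ p ≤ (1 : ℝ≥0∞) ^ p :=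
              ENNReal.rpow_le_rpow (by simpa using ENNReal.ofReal_le_ofReal hle) hp0
          _ = 1 := ENNReal.one_rpow p
      exact this.trans le_self_add
    · have hQ : ∃ m : ℕ, f y ≤ 2 ^ m := by
        obtain ⟨m, hm⟩ := pow_unbounded_of_one_lt (f y) (by norm_num : (1:ℝ) < 2)
        exact ⟨m, hm.le⟩
      set m := Nat.find hQ with hm
      have hQm : f y ≤ 2 ^ m := Nat.find_spec hQ
      have hm0 : m ≠ 0 := by
        intro h0
        rw [h0] at hQm
        simp at hQm
        linarith
      set j := m - 1 with hj
      have hmj : m = j + 1 := (Nat.succ_pred_eq_of_ne_zero hm0).symm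
      have hji : (2:ℝ) ^ j < f y := by
        by_contra hcon
        push_neg at hcon
        exact Nat.find_min hQ (by omega : j < m) hcon
      have hymem : y ∈ S j := hji
      have h1 : (ENNReal.ofReal (f y)) ^ p ≤ ENNReal.ofReal ((2:ℝ) ^ (j+1)) ^ p := by
        apply ENNReal.rpow_le_rpow _ hp0
        apply ENNReal.ofReal_le_ofReal
        rw [← hmj]
        exact hQm
      have h2 : g j y = ENNReal.ofReal ((2:ℝ) ^ (j+1)) ^ p := indicator_of_mem hymem _
      calc (ENNReal.ofReal (f y)) ^ p ≤ g j y := by rw [h2]; exact h1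
        _ ≤ ∑' i : ℕ, g i y := ENNReal.le_tsum j
        _ ≤ 1 + ∑' i : ℕ, g i y := self_le_add_left _ 1
  -- integrate
  have hint : ∫⁻ y in ball x₀ ρ, (ENNReal.ofReal (f y)) ^ p ≤
      volume (ball x₀ ρ) + ∑' j : ℕ, ∫⁻ y in ball x₀ ρ, g j y := by
    calc ∫⁻ y in ball x₀ ρ, (ENNReal.ofReal (f y)) ^ p
        ≤ ∫⁻ y in ball x₀ ρ, (1 + ∑' j : ℕ, g j y) := lintegral_mono hpt
      _ = (∫⁻ _ in ball x₀ ρ, (1:ℝ≥0∞)) + ∫⁻ y in ball x₀ ρ, ∑' j : ℕ, g j y :=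
          lintegral_add_left measurable_const _
      _ = volume (ball x₀ ρ) + ∑' j : ℕ, ∫⁻ y in ball x₀ ρ, g j y := by
          rw [setLIntegral_one, lintegral_tsum]
          intro j
          exact ((measurable_const.indicator (hSmeas j)).aemeasurable)
  -- each term
  have hterm : ∀ j : ℕ, ∫⁻ y in ball x₀ ρ, g j y ≤
      ENNReal.ofReal (M * 2 ^ p * r ^ j) * volume (ball x₀ ρ) := by
    intro j
    have h2j : (0:ℝ) < 2 ^ j := by positivity
    have e1 : ∫⁻ y in ball x₀ ρ, g j y =
        ENNReal.ofReal ((2:ℝ) ^ (j+1)) ^ p * volume (S j ∩ ball x₀ ρ) := by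
      rw [hg, lintegral_indicator (hSmeas j), setLIntegral_const,
        Measure.restrict_apply (hSmeas j)]
    have e2 : S j ∩ ball x₀ ρ = {y ∈ ball x₀ ρ | (2:ℝ) ^ j < |b y - mB b x₀ ρ|} := by
      ext y
      simp only [hS, mem_inter_iff, mem_setOf_eq, mem_sep_iff, hf, hc]
      tauto
    have e3 : volume (S j ∩ ball x₀ ρ) ≤
        ENNReal.ofReal (M / ((2:ℝ) ^ j) ^ k) * volume (ball x₀ ρ) := by
      rw [e2]; exact hMk b hloc hb1 x₀ ρ hρ ((2:ℝ) ^ j) h2j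
    have e4 : ENNReal.ofReal ((2:ℝ) ^ (j+1)) ^ p = ENNReal.ofReal (((2:ℝ) ^ (j+1)) ^ p) :=
      ENNReal.ofReal_rpow_of_nonneg (by positivity) hp0
    have e5 : ((2:ℝ) ^ (j+1)) ^ p * (M / ((2:ℝ) ^ j) ^ k) = M * 2 ^ p * r ^ j := by
      have l1 : ((2:ℝ) ^ (j+1) : ℝ) ^ p = (2:ℝ) ^ (((j:ℝ)+1) * p) := by
        rw [← Real.rpow_natCast (2:ℝ) (j+1), ← Real.rpow_mul (by norm_num : (0:ℝ) ≤ 2)]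
        push_cast; ring_nf
      have l2 : (((2:ℝ) ^ j : ℝ)) ^ k = (2:ℝ) ^ ((j:ℝ) * (k:ℝ)) := by
        rw [← Real.rpow_natCast (2:ℝ) j, ← Real.rpow_natCast ((2:ℝ) ^ ((j:ℝ))) k,
          ← Real.rpow_mul (by norm_num : (0:ℝ) ≤ 2)]
      have l3 : r ^ j = (2:ℝ) ^ ((p - (k:ℝ)) * (j:ℝ)) := by
        rw [hrdef, ← Real.rpow_natCast ((2:ℝ) ^ (p - (k:ℝ))) j,
          ← Real.rpow_mul (by norm_num : (0:ℝ) ≤ 2)]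
      have key : (2:ℝ) ^ (((j:ℝ)+1) * p) =
          2 ^ p * 2 ^ ((p - (k:ℝ)) * (j:ℝ)) * 2 ^ ((j:ℝ) * (k:ℝ)) := by
        rw [← Real.rpow_add two_pos, ← Real.rpow_add two_pos]
        congr 1; ring
      rw [l1, l2, l3, key]
      have hne : (2:ℝ) ^ ((j:ℝ) * (k:ℝ)) ≠ 0 := (Real.rpow_pos_of_pos two_pos _).ne'
      field_simp
    calc ∫⁻ y in ball x₀ ρ, g j y
        = ENNReal.ofReal (((2:ℝ) ^ (j+1)) ^ p) * volume (S j ∩ ball x₀ ρ) := by rw [e1, e4]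
      _ ≤ ENNReal.ofReal (((2:ℝ) ^ (j+1)) ^ p) *
          (ENNReal.ofReal (M / ((2:ℝ) ^ j) ^ k) * volume (ball x₀ ρ)) :=
          mul_le_mul_right e3 _
      _ = ENNReal.ofReal (((2:ℝ) ^ (j+1)) ^ p * (M / ((2:ℝ) ^ j) ^ k)) * volume (ball x₀ ρ) := by
          rw [ENNReal.ofReal_mul (by positivity), mul_assoc]
      _ = ENNReal.ofReal (M * 2 ^ p * r ^ j) * volume (ball x₀ ρ) := by rw [e5]
  -- sum up
  have hsum : ∑' j : ℕ, ENNReal.ofReal (M * 2 ^ p * r ^ j) ≤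
      ENNReal.ofReal (M * 2 ^ p * (1 - r)⁻¹) := by
    have e1 : ∀ j : ℕ, ENNReal.ofReal (M * 2 ^ p * r ^ j) =
        ENNReal.ofReal (M * 2 ^ p) * (ENNReal.ofReal r) ^ j := by
      intro j
      rw [ENNReal.ofReal_mul (by positivity), ENNReal.ofReal_pow hr0.le]
    have e2 : (1 - ENNReal.ofReal r)⁻¹ = ENNReal.ofReal ((1 - r)⁻¹) := by
      rw [← ENNReal.ofReal_one, ← ENNReal.ofReal_sub 1 hr0.le,
        ← ENNReal.ofReal_inv_of_pos h1r]
    rw [tsum_congr e1, ENNReal.tsum_mul_left, ENNReal.tsum_geometric, e2,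
      ← ENNReal.ofReal_mul (by positivity : (0:ℝ) ≤ M * 2 ^ p)]
  calc ∫⁻ y in ball x₀ ρ, (ENNReal.ofReal |b y - mB b x₀ ρ|) ^ p
      ≤ volume (ball x₀ ρ) + ∑' j : ℕ, ∫⁻ y in ball x₀ ρ, g j y := hint
    _ ≤ volume (ball x₀ ρ) + ∑' j : ℕ, ENNReal.ofReal (M * 2 ^ p * r ^ j) *
        volume (ball x₀ ρ) := by
        apply add_le_add_right
        exact ENNReal.tsum_le_tsum hterm
    _ = volume (ball x₀ ρ) + (∑' j : ℕ, ENNReal.ofReal (M * 2 ^ p * r ^ j)) *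
        volume (ball x₀ ρ) := by rw [ENNReal.tsum_mul_right]
    _ ≤ volume (ball x₀ ρ) + ENNReal.ofReal (M * 2 ^ p * (1 - r)⁻¹) * volume (ball x₀ ρ) :=
        add_le_add_right (mul_le_mul_left hsum _) _
    _ = ENNReal.ofReal C * volume (ball x₀ ρ) := by
        rw [hC, ENNReal.ofReal_add one_pos.le hMr, ENNReal.ofReal_one, add_mul, one_mul]


end JNaux

/-- Accomazzo: if `b ∈ BMO` then `b² ∈ BMO_b^q`, quantitatively:
`sup_B inf_{c₀,c₁} (⨍_B |b² - c₀ - c₁ b|^q)^{1/q} ≤ C ‖b‖_{BMO}²` with `C = C(n,q)`. -/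
theorem stmt13 {n : ℕ} (q : ℝ) (hq : 1 ≤ q) :
    ∃ C : ℝ, 0 ≤ C ∧ ∀ b : Rn n → ℝ, IsBMO b → ∀ (x₀ : Rn n) (ρ : ℝ), 0 < ρ →
      (⨅ (c₀ : ℝ) (c₁ : ℝ),
          ((∫⁻ x in ball x₀ ρ, ENNReal.ofReal |b x ^ 2 - c₀ - c₁ * b x| ^ q) /
            volume (ball x₀ ρ)) ^ (1 / q)) ≤
        ENNReal.ofReal C * bmoNorm b ^ 2 := by
  have hq0 : q ≠ 0 := by linarith
  have hq0' : (0:ℝ) ≤ 1 / q := by positivity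
  rcases eq_or_ne n 0 with rfl | hn
  · -- trivial case `n = 0`
    refine ⟨0, le_refl 0, fun b hb x₀ ρ hρ => ?_⟩
    have h0 : ((∫⁻ x in ball x₀ ρ,
        ENNReal.ofReal |b x ^ 2 - b x₀ ^ 2 - 0 * b x| ^ q) /
        volume (ball x₀ ρ)) ^ (1 / q) = 0 := by
      have hI : ∀ x : Rn 0, ENNReal.ofReal |b x ^ 2 - b x₀ ^ 2 - 0 * b x| ^ q = 0 := by
        intro x
        rw [Subsingleton.elim x x₀]
        simp only [zero_mul, sub_zero, sub_self, abs_zero, ENNReal.ofReal_zero]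
        exact ENNReal.zero_rpow_of_pos (by linarith)
      rw [lintegral_congr hI, lintegral_zero, ENNReal.zero_div]
      exact ENNReal.zero_rpow_of_pos (by positivity)
    exact le_trans (iInf_le_of_le (b x₀ ^ 2) (iInf_le_of_le 0 (le_of_eq h0))) (by simp)
  · -- main case
    have hp2q : (1:ℝ) ≤ 2 * q := by linarith
    obtain ⟨C, hC0, hCmom⟩ := JNaux.moment hn hp2q
    set Cf : ℝ := C ^ (1/q) with hCf
    have hCf0 : 0 ≤ Cf := Real.rpow_nonneg hC0 _
    refine ⟨Cf, hCf0, fun b hb x₀ ρ hρ => ?_⟩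
    obtain ⟨hloc, hfin⟩ := hb
    have hμ0 : volume (ball x₀ ρ) ≠ 0 := (measure_ball_pos volume x₀ hρ).ne'
    have hμt : volume (ball x₀ ρ) ≠ ⊤ := measure_ball_lt_top.ne
    -- measurable representative
    have hbm := hloc.aestronglyMeasurable
    set b' : Rn n → ℝ := hbm.mk b with hb'def
    have hbb' : b =ᵐ[volume] b' := hbm.ae_eq_mk
    have hb'meas : Measurable b' := hbm.stronglyMeasurable_mk.measurable
    have hb'loc : LocallyIntegrable b' volume := by
      intro x
      obtain ⟨s, hs, hint⟩ := hloc x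
      exact ⟨s, hs, hint.congr (ae_restrict_of_ae hbb')⟩
    -- oscillation bound for `b'` in terms of `bmoNorm b`
    have hosc : ∀ (x : Rn n) (r : ℝ), 0 < r →
        (∫⁻ y in ball x r, ENNReal.ofReal |b' y - JNaux.mB b' x r|) ≤
          bmoNorm b * volume (ball x r) := by
      intro x r hr
      have hmeq : JNaux.mB b' x r = ⨍ z in ball x r, b z := by
        unfold JNaux.mB
        exact (average_congr (ae_restrict_of_ae hbb')).symm
      have hlint : (∫⁻ y in ball x r, ENNReal.ofReal |b' y - JNaux.mB b' x r|)
          = ∫⁻ y in ball x r, ENNReal.ofReal |b y - ⨍ z in ball x r, b z| := by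
        rw [hmeq]
        apply lintegral_congr_ae
        filter_upwards [ae_restrict_of_ae hbb'] with y hy
        rw [hy]
      rw [hlint]
      have hterm : (∫⁻ y in ball x r, ENNReal.ofReal |b y - ⨍ z in ball x r, b z|) /
          volume (ball x r) ≤ bmoNorm b := by
        unfold bmoNorm
        exact le_iSup_of_le x (le_iSup_of_le r (le_iSup_of_le hr (le_refl _)))
      rw [ENNReal.div_le_iff_le_mul (Or.inl (measure_ball_pos volume x hr).ne')
        (Or.inl measure_ball_lt_top.ne)] at hterm
      exact hterm
    set L := ⨅ (c₀ : ℝ) (c₁ : ℝ),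
        ((∫⁻ x in ball x₀ ρ, ENNReal.ofReal |b x ^ 2 - c₀ - c₁ * b x| ^ q) /
          volume (ball x₀ ρ)) ^ (1 / q) with hLdef
    set β : ℝ := JNaux.mB b' x₀ ρ with hβ
    -- main claim, for any admissible bound `mm` on the BMO norm
    have hclaim : ∀ mm : ℝ, 0 < mm → bmoNorm b ≤ ENNReal.ofReal mm →
        L ≤ ENNReal.ofReal Cf * (ENNReal.ofReal mm) ^ 2 := by
      intro mm hmm hbmo
      set b₂ : Rn n → ℝ := fun y => mm⁻¹ * b' y with hb₂def
      have hb₂meas : Measurable b₂ := hb'meas.const_mul _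
      have hb₂loc : LocallyIntegrable b₂ volume := by
        intro x
        obtain ⟨s, hs, hint⟩ := hb'loc x
        exact ⟨s, hs, hint.const_mul _⟩
      have hmB₂ : ∀ (x : Rn n) (r : ℝ), JNaux.mB b₂ x r = mm⁻¹ * JNaux.mB b' x r := by
        intro x r
        unfold JNaux.mB
        exact integral_const_mul mm⁻¹ _
      have hpt : ∀ (x : Rn n) (r : ℝ) (y : Rn n),
          |b₂ y - JNaux.mB b₂ x r| = mm⁻¹ * |b' y - JNaux.mB b' x r| := by
        intro x r y
        rw [hmB₂, hb₂def]
        simp only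
        rw [← mul_sub, abs_mul, abs_of_pos (inv_pos.2 hmm)]
      have hb1₂ : ∀ (x : Rn n) (r : ℝ), 0 < r →
          JNaux.Jb b₂ (JNaux.mB b₂ x r) x r ≤ JNaux.vB n x r := by
        intro x r hr
        have hvB := JNaux.vB_pos (n := n) x hr
        have hJ' : JNaux.Jb b' (JNaux.mB b' x r) x r ≤ mm * JNaux.vB n x r := by
          have h1 : ENNReal.ofReal (JNaux.Jb b' (JNaux.mB b' x r) x r) =
              ∫⁻ y in ball x r, ENNReal.ofReal |b' y - JNaux.mB b' x r| :=
            ofReal_integral_eq_lintegral_ofReal (JNaux.intAbs hb'loc _ x r)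
              (Eventually.of_forall fun _ => abs_nonneg _)
          have h2 := hosc x r hr
          rw [← h1] at h2
          have h3 : bmoNorm b * volume (ball x r) ≤
              ENNReal.ofReal (mm * JNaux.vB n x r) := by
            rw [ENNReal.ofReal_mul hmm.le, ← JNaux.volume_ball_eq]
            exact mul_le_mul_left hbmo _
          exact (ENNReal.ofReal_le_ofReal_iff (by positivity)).1 (h2.trans h3)
        have hJeq : JNaux.Jb b₂ (JNaux.mB b₂ x r) x r
            = mm⁻¹ * JNaux.Jb b' (JNaux.mB b' x r) x r := by
          unfold JNaux.Jb
          rw [← integral_const_mul]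
          exact integral_congr_ae (Eventually.of_forall fun y => hpt x r y)
        rw [hJeq]
        calc mm⁻¹ * JNaux.Jb b' (JNaux.mB b' x r) x r
            ≤ mm⁻¹ * (mm * JNaux.vB n x r) :=
              mul_le_mul_of_nonneg_left hJ' (by positivity)
          _ = JNaux.vB n x r := by field_simp
      have hmom := hCmom b₂ hb₂meas hb₂loc hb1₂ x₀ ρ hρ
      -- rewrite the integrand with the chosen c₀, c₁
      have hne_top : ENNReal.ofReal (mm ^ 2) ^ q ≠ ⊤ :=
        ENNReal.rpow_ne_top_of_nonneg (by linarith) ENNReal.ofReal_ne_top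
      have hrw : (∫⁻ x in ball x₀ ρ,
          ENNReal.ofReal |b x ^ 2 - (-(β^2)) - (2*β) * b x| ^ q)
          = ENNReal.ofReal (mm ^ 2) ^ q *
            ∫⁻ x in ball x₀ ρ, ENNReal.ofReal |b₂ x - JNaux.mB b₂ x₀ ρ| ^ (2*q) := by
        rw [← lintegral_const_mul' _ _ hne_top]
        apply lintegral_congr_ae
        filter_upwards [ae_restrict_of_ae hbb'] with y hy
        have hm2 : JNaux.mB b₂ x₀ ρ = mm⁻¹ * β := hmB₂ x₀ ρ
        have e0 : b y ^ 2 - (-(β^2)) - (2*β) * b y = (b y - β)^2 := by ring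
        rw [e0, hy]
        have e1 : (b' y - β) ^ 2 = mm ^ 2 * (b₂ y - mm⁻¹ * β) ^ 2 := by
          have hb2y : b₂ y = mm⁻¹ * b' y := rfl
          rw [hb2y, show mm⁻¹ * b' y - mm⁻¹ * β = mm⁻¹ * (b' y - β) by ring, mul_pow,
            ← mul_assoc, show mm ^ 2 * mm⁻¹ ^ 2 = 1 by
              rw [← mul_pow, mul_inv_cancel₀ hmm.ne', one_pow], one_mul]
        rw [e1, ← hm2, abs_of_nonneg (by positivity : (0:ℝ) ≤ mm ^ 2 * (b₂ y - JNaux.mB b₂ x₀ ρ) ^ 2),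
          ENNReal.ofReal_mul (by positivity),
          ENNReal.mul_rpow_of_nonneg _ _ (by linarith : (0:ℝ) ≤ q)]
        congr 1
        rw [← sq_abs (b₂ y - JNaux.mB b₂ x₀ ρ), ENNReal.ofReal_pow (abs_nonneg _),
          ← ENNReal.rpow_natCast (ENNReal.ofReal |b₂ y - JNaux.mB b₂ x₀ ρ|) 2,
          ← ENNReal.rpow_mul]
        norm_num
      have hLle : L ≤ ((∫⁻ x in ball x₀ ρ,
          ENNReal.ofReal |b x ^ 2 - (-(β^2)) - (2*β) * b x| ^ q) /
            volume (ball x₀ ρ)) ^ (1 / q) := by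
        rw [hLdef]
        exact iInf_le_of_le (-(β^2)) (iInf_le _ (2*β))
      have hdiv : (ENNReal.ofReal (mm ^ 2) ^ q *
          ∫⁻ x in ball x₀ ρ, ENNReal.ofReal |b₂ x - JNaux.mB b₂ x₀ ρ| ^ (2*q)) /
            volume (ball x₀ ρ)
          ≤ ENNReal.ofReal (mm ^ 2) ^ q * ENNReal.ofReal C := by
        rw [mul_div_assoc]
        exact mul_le_mul_right (ENNReal.div_le_of_le_mul hmom) _
      calc L ≤ ((∫⁻ x in ball x₀ ρ,
            ENNReal.ofReal |b x ^ 2 - (-(β^2)) - (2*β) * b x| ^ q) /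
              volume (ball x₀ ρ)) ^ (1 / q) := hLle
        _ = ((ENNReal.ofReal (mm ^ 2) ^ q *
            ∫⁻ x in ball x₀ ρ, ENNReal.ofReal |b₂ x - JNaux.mB b₂ x₀ ρ| ^ (2*q)) /
              volume (ball x₀ ρ)) ^ (1 / q) := by rw [hrw]
        _ ≤ (ENNReal.ofReal (mm ^ 2) ^ q * ENNReal.ofReal C) ^ (1 / q) :=
            ENNReal.rpow_le_rpow hdiv hq0'
        _ = ENNReal.ofReal (mm ^ 2) * (ENNReal.ofReal C) ^ (1 / q) := by
            rw [ENNReal.mul_rpow_of_nonneg _ _ hq0', ← ENNReal.rpow_mul, mul_one_div,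
              div_self hq0, ENNReal.rpow_one]
        _ = ENNReal.ofReal Cf * (ENNReal.ofReal mm) ^ 2 := by
            rw [hCf, ← ENNReal.ofReal_rpow_of_nonneg hC0 hq0',
              ENNReal.ofReal_pow hmm.le, mul_comm]
    -- pass to the limit in `mm`
    have hfin' : bmoNorm b ≠ ⊤ := hfin.ne
    set Bv := (bmoNorm b).toReal with hBv
    have hev : ∀ ε ∈ Ioi (0:ℝ), L ≤ ENNReal.ofReal Cf * (ENNReal.ofReal (Bv + ε)) ^ 2 := by
      intro ε hε
      have hε' : (0:ℝ) < ε := hε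
      apply hclaim (Bv + ε) (by positivity)
      calc bmoNorm b = ENNReal.ofReal Bv := (ENNReal.ofReal_toReal hfin').symm
        _ ≤ ENNReal.ofReal (Bv + ε) := ENNReal.ofReal_le_ofReal (by linarith)
    have htend : Tendsto (fun ε : ℝ => ENNReal.ofReal Cf * (ENNReal.ofReal (Bv + ε)) ^ 2)
        (𝓝[>] (0:ℝ)) (𝓝 (ENNReal.ofReal Cf * (ENNReal.ofReal Bv) ^ 2)) := by
      apply ENNReal.Tendsto.const_mul _ (Or.inr ENNReal.ofReal_ne_top)
      have h1 : Tendsto (fun ε : ℝ => Bv + ε) (𝓝[>] (0:ℝ)) (𝓝 Bv) := by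
        have h2 := (tendsto_id.mono_left (nhdsWithin_le_nhds : 𝓝[>] (0:ℝ) ≤ 𝓝 0))
        simpa using tendsto_const_nhds.add h2
      have h2 : Tendsto (fun ε : ℝ => ENNReal.ofReal (Bv + ε)) (𝓝[>] (0:ℝ))
          (𝓝 (ENNReal.ofReal Bv)) := (ENNReal.continuous_ofReal.tendsto _).comp h1
      exact ((ENNReal.continuous_pow 2).tendsto (ENNReal.ofReal Bv)).comp h2
    have hlim : L ≤ ENNReal.ofReal Cf * (ENNReal.ofReal Bv) ^ 2 :=
      ge_of_tendsto htend (eventually_nhdsWithin_of_forall hev)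
    rw [hBv, ENNReal.ofReal_toReal hfin'] at hlim
    exact hlim
end
end

section
/- Let b ∈ BMO, δ ∈ (0,1), let h be a measurable function on ℝⁿ, let G : ℝⁿ → [0,∞], and suppose that to every ball B a real number γ_B is assigned such that |γ_B| ≤ G(x) whenever x ∈ B. Then there is a constant C depending only on n and δ such that for every x ∈ ℝⁿ: M_{♯,δ}(h)(x) ≤ C ( sup over balls B containing x of inf_{c₁∈ℝ} (⨍_B |h(y) − c₁ − γ_B b(y)|^δ dy)^{1/δ} + ‖b‖_{BMO} G(x) ). -/
open MeasureTheory Metric Set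
open scoped ENNReal NNReal BigOperators

noncomputable section

/-- The sharp maximal function `M_{♯,δ} h(x) = sup_{B ∋ x} inf_c (⨍_B |h - c|^δ)^{1/δ}`. -/
def sharpMax {n : ℕ} (δ : ℝ) (h : Rn n → ℝ) (x : Rn n) : ℝ≥0∞ :=
  ⨆ (c : Rn n) (r : ℝ) (_ : 0 < r) (_ : x ∈ ball c r),
    ⨅ c₀ : ℝ,
      ((∫⁻ y in ball c r, ENNReal.ofReal |h y - c₀| ^ δ) / volume (ball c r)) ^ (1 / δ)

lemma aux_add_rpow_le (a b : ℝ≥0∞) {p : ℝ} (hp : 0 ≤ p) :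
    (a + b) ^ p ≤ 2 ^ p * (a ^ p + b ^ p) := by
  rcases le_total a b with hab | hab
  · calc (a + b) ^ p ≤ (2 * b) ^ p := by
          refine ENNReal.rpow_le_rpow ?_ hp
          rw [two_mul]; exact add_le_add_left hab b
    _ = 2 ^ p * b ^ p := ENNReal.mul_rpow_of_nonneg _ _ hp
    _ ≤ 2 ^ p * (a ^ p + b ^ p) := by gcongr; exact le_add_self
  · calc (a + b) ^ p ≤ (2 * a) ^ p := by
          refine ENNReal.rpow_le_rpow ?_ hp
          rw [two_mul]; exact add_le_add_right hab a
    _ = 2 ^ p * a ^ p := ENNReal.mul_rpow_of_nonneg _ _ hp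
    _ ≤ 2 ^ p * (a ^ p + b ^ p) := by gcongr; exact le_self_add

lemma aux_jensen {n : ℕ} {δ : ℝ} (hδ0 : 0 < δ) (hδ1 : δ < 1) (c : Rn n) (r : ℝ) (hr : 0 < r)
    (F : Rn n → ℝ≥0∞) (hF : AEMeasurable F (volume.restrict (ball c r))) :
    (∫⁻ y in ball c r, F y ^ δ) / volume (ball c r) ≤
      ((∫⁻ y in ball c r, F y) / volume (ball c r)) ^ δ := by
  set μB := volume (ball c r) with hμB
  have hμ0 : μB ≠ 0 := (measure_ball_pos volume c hr).ne'
  have hμt : μB ≠ ∞ := measure_ball_lt_top.ne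
  have conj : (1/δ).HolderConjugate (1/(1-δ)) := by
    rw [Real.holderConjugate_iff]
    constructor
    · rw [lt_div_iff₀ hδ0]; linarith
    · rw [one_div, one_div, inv_inv, inv_inv]; ring
  have holder := ENNReal.lintegral_mul_le_Lp_mul_Lq (volume.restrict (ball c r)) conj
    (hF.pow_const δ) aemeasurable_const (f := fun y => F y ^ δ) (g := fun _ => 1)
  have hδδ : δ * (1/δ) = 1 := by field_simp
  simp only [Pi.mul_apply, mul_one, one_div_one_div] at holder
  have e1 : ∀ y, (F y ^ δ) ^ (1/δ) = F y := by
    intro y; rw [← ENNReal.rpow_mul, hδδ, ENNReal.rpow_one]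
  have e2 : (fun y : Rn n => (1:ℝ≥0∞) ^ (1/(1-δ))) = fun _ => (1:ℝ≥0∞) := by
    funext y; simp
  simp only [e1, ENNReal.one_rpow, lintegral_const, Measure.restrict_apply MeasurableSet.univ,
    univ_inter, one_mul] at holder
  -- holder : ∫⁻ F^δ ≤ (∫⁻ F)^δ * μB^(1-δ)
  have key : (∫⁻ y in ball c r, F y ^ δ) ≤ (∫⁻ y in ball c r, F y) ^ δ * μB ^ (1 - δ) := holder
  calc (∫⁻ y in ball c r, F y ^ δ) / μB
      ≤ ((∫⁻ y in ball c r, F y) ^ δ * μB ^ (1 - δ)) / μB := by gcongr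
    _ = (∫⁻ y in ball c r, F y) ^ δ * (μB ^ (1 - δ) * μB ^ (-1 : ℝ)) := by
        rw [div_eq_mul_inv, mul_assoc, ENNReal.rpow_neg_one]
    _ = (∫⁻ y in ball c r, F y) ^ δ * μB ^ (-δ) := by
        rw [← ENNReal.rpow_add _ _ hμ0 hμt]; ring_nf
    _ = ((∫⁻ y in ball c r, F y) / μB) ^ δ := by
        rw [ENNReal.div_rpow_of_nonneg _ _ hδ0.le, ENNReal.rpow_neg, div_eq_mul_inv]


/-- abstract pointwise sharp-maximal estimate: if to every ball `B` (given by
its center and radius) a number `γ_B` is assigned with `|γ_B| ≤ G(x)` for `x ∈ B`, then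
`M_{♯,δ}(h)(x) ≤ C (sup_{B ∋ x} inf_{c₁} (⨍_B |h - c₁ - γ_B b|^δ)^{1/δ} + ‖b‖_{BMO} G(x))`. -/
theorem stmt18 {n : ℕ} (δ : ℝ) (hδ0 : 0 < δ) (hδ1 : δ < 1) :
    ∃ C : ℝ, 0 ≤ C ∧ ∀ b : Rn n → ℝ, IsBMO b → ∀ h : Rn n → ℝ, Measurable h →
      ∀ G : Rn n → ℝ≥0∞, ∀ γ : Rn n → ℝ → ℝ,
      (∀ (c : Rn n) (r : ℝ), 0 < r → ∀ x ∈ ball c r, ENNReal.ofReal |γ c r| ≤ G x) →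
      ∀ x : Rn n,
      sharpMax δ h x ≤
        ENNReal.ofReal C *
          ((⨆ (c : Rn n) (r : ℝ) (_ : 0 < r) (_ : x ∈ ball c r),
              ⨅ c₁ : ℝ,
                ((∫⁻ y in ball c r, ENNReal.ofReal |h y - c₁ - γ c r * b y| ^ δ) /
                  volume (ball c r)) ^ (1 / δ)) +
            bmoNorm b * G x) := by
  refine ⟨2 ^ (1/δ), by positivity, ?_⟩
  intro b hb h hmeas G γ hγ x
  have hδδ : δ * (1/δ) = 1 := by field_simp
  have hK : ENNReal.ofReal (2 ^ (1/δ)) = (2:ℝ≥0∞) ^ (1/δ) := by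
    rw [← ENNReal.ofReal_rpow_of_pos two_pos, ENNReal.ofReal_ofNat]
  rw [hK]
  set K : ℝ≥0∞ := (2:ℝ≥0∞) ^ (1/δ) with hKdef
  have hK0 : K ≠ 0 := (ENNReal.rpow_pos (by norm_num) (by norm_num)).ne'
  have hKt : K ≠ ∞ := ENNReal.rpow_ne_top_of_nonneg (by positivity) (by norm_num)
  simp only [sharpMax]
  refine iSup_le fun c => iSup_le fun r => iSup_le fun hr => iSup_le fun hx => ?_
  set μB := volume (ball c r) with hμB
  set γ0 := γ c r with hγ0
  set bB := (⨍ z in ball c r, b z) with hbB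
  set Z := bmoNorm b * G x with hZ
  have hbm : AEMeasurable b (volume.restrict (ball c r)) :=
    hb.1.aestronglyMeasurable.aemeasurable.restrict
  set Y : ℝ → ℝ≥0∞ := fun c₁ =>
    ((∫⁻ y in ball c r, ENNReal.ofReal |h y - c₁ - γ0 * b y| ^ δ) / μB) ^ (1/δ) with hY
  have claim : ∀ c₁ : ℝ,
      (⨅ c₀ : ℝ, ((∫⁻ y in ball c r, ENNReal.ofReal |h y - c₀| ^ δ) / μB) ^ (1/δ)) ≤
        K * (Y c₁ + Z) := by
    intro c₁
    set A := (∫⁻ y in ball c r, ENNReal.ofReal |h y - c₁ - γ0 * b y| ^ δ) / μB with hA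
    set F : Rn n → ℝ≥0∞ := fun y => ENNReal.ofReal |b y - bB| with hF
    have hFm : AEMeasurable F (volume.restrict (ball c r)) :=
      ENNReal.measurable_ofReal.comp_aemeasurable (continuous_abs.measurable.comp_aemeasurable (hbm.sub aemeasurable_const))
    have hAm : AEMeasurable (fun y => ENNReal.ofReal |h y - c₁ - γ0 * b y| ^ δ)
        (volume.restrict (ball c r)) := by
      refine (ENNReal.measurable_ofReal.comp_aemeasurable ?_).pow_const δ
      exact continuous_abs.measurable.comp_aemeasurable
        ((hmeas.aemeasurable.restrict.sub aemeasurable_const).sub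
          (aemeasurable_const.mul hbm))
    have ptw2 : ∀ y, ENNReal.ofReal |h y - (c₁ + γ0 * bB)| ^ δ ≤
        ENNReal.ofReal |h y - c₁ - γ0 * b y| ^ δ + (ENNReal.ofReal |γ0| * F y) ^ δ := by
      intro y
      have hsplit : h y - (c₁ + γ0 * bB) = (h y - c₁ - γ0 * b y) + γ0 * (b y - bB) := by ring
      have h1 : ENNReal.ofReal |h y - (c₁ + γ0 * bB)| ≤
          ENNReal.ofReal |h y - c₁ - γ0 * b y| + ENNReal.ofReal |γ0| * F y := by
        rw [hF, ← ENNReal.ofReal_mul (abs_nonneg _),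
          ← ENNReal.ofReal_add (abs_nonneg _) (by positivity)]
        apply ENNReal.ofReal_le_ofReal
        rw [hsplit, ← abs_mul]
        exact abs_add_le _ _
      calc ENNReal.ofReal |h y - (c₁ + γ0 * bB)| ^ δ
          ≤ (ENNReal.ofReal |h y - c₁ - γ0 * b y| + ENNReal.ofReal |γ0| * F y) ^ δ :=
            ENNReal.rpow_le_rpow h1 hδ0.le
        _ ≤ _ := ENNReal.rpow_add_le_add_rpow _ _ hδ0.le hδ1.le
    have int_le : (∫⁻ y in ball c r, ENNReal.ofReal |h y - (c₁ + γ0 * bB)| ^ δ) ≤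
        (∫⁻ y in ball c r, ENNReal.ofReal |h y - c₁ - γ0 * b y| ^ δ) +
          ENNReal.ofReal |γ0| ^ δ * ∫⁻ y in ball c r, F y ^ δ := by
      calc (∫⁻ y in ball c r, ENNReal.ofReal |h y - (c₁ + γ0 * bB)| ^ δ)
          ≤ ∫⁻ y in ball c r, (ENNReal.ofReal |h y - c₁ - γ0 * b y| ^ δ +
              (ENNReal.ofReal |γ0| * F y) ^ δ) := lintegral_mono ptw2
        _ = (∫⁻ y in ball c r, ENNReal.ofReal |h y - c₁ - γ0 * b y| ^ δ) +
              ∫⁻ y in ball c r, (ENNReal.ofReal |γ0| * F y) ^ δ := lintegral_add_left' hAm _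
        _ = _ := by
            congr 1
            simp_rw [ENNReal.mul_rpow_of_nonneg _ _ hδ0.le]
            exact lintegral_const_mul' _ _
              (ENNReal.rpow_ne_top_of_nonneg hδ0.le ENNReal.ofReal_ne_top)
    have bmo_le : (∫⁻ y in ball c r, F y) / μB ≤ bmoNorm b := by
      rw [bmoNorm]
      exact le_iSup_of_le c (le_iSup_of_le r (le_iSup_of_le hr le_rfl))
    have jens : (∫⁻ y in ball c r, F y ^ δ) / μB ≤ bmoNorm b ^ δ :=
      (aux_jensen hδ0 hδ1 c r hr F hFm).trans (ENNReal.rpow_le_rpow bmo_le hδ0.le)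
    have div_le : (∫⁻ y in ball c r, ENNReal.ofReal |h y - (c₁ + γ0 * bB)| ^ δ) / μB ≤
        A + ENNReal.ofReal |γ0| ^ δ * bmoNorm b ^ δ := by
      calc (∫⁻ y in ball c r, ENNReal.ofReal |h y - (c₁ + γ0 * bB)| ^ δ) / μB
          ≤ ((∫⁻ y in ball c r, ENNReal.ofReal |h y - c₁ - γ0 * b y| ^ δ) +
              ENNReal.ofReal |γ0| ^ δ * ∫⁻ y in ball c r, F y ^ δ) / μB := by gcongr
        _ = A + ENNReal.ofReal |γ0| ^ δ * ((∫⁻ y in ball c r, F y ^ δ) / μB) := by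
              rw [ENNReal.add_div, hA, mul_div_assoc]
        _ ≤ A + ENNReal.ofReal |γ0| ^ δ * bmoNorm b ^ δ := by gcongr
    calc (⨅ c₀ : ℝ, ((∫⁻ y in ball c r, ENNReal.ofReal |h y - c₀| ^ δ) / μB) ^ (1/δ))
        ≤ ((∫⁻ y in ball c r, ENNReal.ofReal |h y - (c₁ + γ0 * bB)| ^ δ) / μB) ^ (1/δ) :=
          iInf_le _ _
      _ ≤ (A + ENNReal.ofReal |γ0| ^ δ * bmoNorm b ^ δ) ^ (1/δ) :=
          ENNReal.rpow_le_rpow div_le (by positivity)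
      _ ≤ K * (A ^ (1/δ) + (ENNReal.ofReal |γ0| ^ δ * bmoNorm b ^ δ) ^ (1/δ)) :=
          aux_add_rpow_le _ _ (by positivity)
      _ = K * (Y c₁ + ENNReal.ofReal |γ0| * bmoNorm b) := by
          rw [← ENNReal.mul_rpow_of_nonneg _ _ hδ0.le, ← ENNReal.rpow_mul, hδδ,
            ENNReal.rpow_one]
      _ ≤ K * (Y c₁ + Z) := by
          refine mul_le_mul_right (add_le_add_right ?_ _) _
          rw [hZ, mul_comm]
          exact mul_le_mul_right (hγ c r hr x hx) _
  have step2 : (⨅ c₀ : ℝ, ((∫⁻ y in ball c r, ENNReal.ofReal |h y - c₀| ^ δ) / μB) ^ (1/δ)) ≤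
      K * ((⨅ c₁, Y c₁) + Z) := by
    refine le_trans (le_iInf claim) (le_of_eq ?_)
    rw [← ENNReal.mul_iInf_of_ne hK0 hKt]
    congr 1
    exact ENNReal.iInf_add.symm
  refine step2.trans ?_
  gcongr
  exact le_iSup_of_le c (le_iSup_of_le r (le_iSup_of_le hr (le_iSup_of_le hx le_rfl)))
end
end
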